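/- Suppose f is an n-ary operation on A(M) preserving all binary relations of A(M), g_1,…,g_n ∈ E (elements with content ≠ ·) with g_ℓ ∈ C (content in {0,A,B}), f(g_1,…,g_ℓ,…,g_n) = α ∈ Y (content ≠ ×), and f(g_1,…,X(g_ℓ),…,g_n) ∈ Y. Then f(g_1,…,X(g_ℓ),…,g_n) = α. -/
import Mathlib


namespace AMPaper

inductive Cnt
  | dot | times | zero | A | B
deriving DecidableEq

inductive Reg
  | A | B
deriving DecidableEq

/-- A Minsky machine instruction for a machine with states `{0,…,N}`:
`inc R j` is `(i,R,j)` and `dec R k j` is `(i,R,k,j)`. -/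
inductive Instr (N : ℕ)
  | inc : Reg → Fin (N + 1) → Instr N
  | dec : Reg → Fin (N + 1) → Fin (N + 1) → Instr N

/-- A Minsky machine with states `{0,…,N}` and exactly one instruction per state. -/
structure Minsky (N : ℕ) where
  instr : Fin (N + 1) → Instr N

/-- Elements of the universe `A(M)`: pairs `⟨i,c⟩` of a state and a content. -/
abbrev El (N : ℕ) := Fin (N + 1) × Cnt

/-- The content corresponding to a register. -/
def regCnt : Reg → Cnt
  | .A => Cnt.A
  | .B => Cnt.B

/-- The helper function `X(⟨i,c⟩) = ⟨i,×⟩`. -/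
def Xf {N : ℕ} (x : El N) : El N := (x.1, Cnt.times)

/-- The semilattice meet. -/
def meet {N : ℕ} (x y : El N) : El N :=
  if x = y then x else (min x.1 y.1, Cnt.times)

/-- The order induced by the meet: `x ≤ y` iff `x ∧ y = x`. -/
def elLe {N : ℕ} (x y : El N) : Prop := meet x y = x

/-- The operation `M(x,y)` of `A(M)`. -/
def Mop {N : ℕ} (m : Minsky N) (x y : El N) : El N :=
  if x.1 = y.1 then
    match m.instr x.1 with
    | .inc R j =>
        if x.2 = Cnt.dot ∧ y.2 = Cnt.zero then (j, regCnt R)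
        else if x.2 = Cnt.zero ∧ y.2 = Cnt.dot then (j, Cnt.dot)
        else if x = y ∧ x.2 ≠ Cnt.dot then (j, x.2)
        else (j, Cnt.times)
    | .dec R _ j =>
        if x.2 = Cnt.dot ∧ y.2 = regCnt R then (j, Cnt.zero)
        else if x.2 = regCnt R ∧ y.2 = Cnt.dot then (j, Cnt.dot)
        else if x = y ∧ x.2 ≠ Cnt.dot then (j, x.2)
        else (j, Cnt.times)
  else Xf y

/-- The operation `M'(x)` of `A(M)`. -/
def M'op {N : ℕ} (m : Minsky N) (x : El N) : El N :=
  match m.instr x.1 with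
  | .dec R k _ => if x.2 = regCnt R then (k, Cnt.times) else (k, x.2)
  | .inc _ _ => Xf x

/-- The operation `I(x,y)` of `A(M)`. -/
def Iop {N : ℕ} (x y : El N) : El N :=
  if x.2 = Cnt.dot then ((1 : Fin (N + 1)), Cnt.dot)
  else if y.2 = Cnt.zero ∨ y.2 = Cnt.A ∨ y.2 = Cnt.B then ((1 : Fin (N + 1)), Cnt.zero)
  else ((1 : Fin (N + 1)), Cnt.times)

/-- The operation `H(x)` of `A(M)`. -/
def Hop {N : ℕ} (x : El N) : El N :=
  if x = ((0 : Fin (N + 1)), Cnt.zero) ∨ x = ((0 : Fin (N + 1)), Cnt.dot)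
  then ((0 : Fin (N + 1)), Cnt.zero)
  else ((0 : Fin (N + 1)), Cnt.times)

/-- The operation `N₀(x,y,z)` of `A(M)`. -/
def N0op {N : ℕ} (x y z : El N) : El N :=
  if x = ((0 : Fin (N + 1)), Cnt.dot) ∧ y.1 = z.1 then y
  else if x = ((0 : Fin (N + 1)), Cnt.zero) ∧ z.2 ≠ Cnt.dot ∧ y.1 = z.1 then z
  else Xf (meet y z)

/-- The operation `S(x,y,z)` of `A(M)`. -/
def Sop {N : ℕ} (x y z : El N) : El N :=
  if x = ((1 : Fin (N + 1)), Cnt.zero) ∧ y.1 = (1 : Fin (N + 1)) ∧ z.1 = (1 : Fin (N + 1)) ∧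
      ((y.2 = Cnt.dot ∧ z.2 = Cnt.zero) ∨ (y.2 = Cnt.zero ∧ z.2 = Cnt.dot) ∨
        (y.2 = Cnt.zero ∧ z.2 = Cnt.zero))
  then ((1 : Fin (N + 1)), Cnt.zero)
  else ((1 : Fin (N + 1)), Cnt.times)

/-- The operation `N·(u,x,y,z)` of `A(M)`. -/
def Ndotop {N : ℕ} (u x y z : El N) : El N :=
  if x = y ∧ x.2 ≠ Cnt.times ∧ x.1 = z.1 then x
  else if u.2 = Cnt.dot ∧ y.2 = Cnt.times ∧ x.1 = y.1 ∧ y.1 = z.1 then x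
  else if u.2 = Cnt.dot ∧ x.2 = Cnt.times ∧ x.1 = y.1 ∧ y.1 = z.1 then y
  else if u.2 = Cnt.dot ∧ (z = x ∨ z = y) ∧ x.1 = y.1 ∧ y.1 = z.1 then z
  else Xf (meet x (meet y z))

/-- The operation `P(u,v,x,y)` of `A(M)`. -/
def Pop {N : ℕ} (u v x y : El N) : El N :=
  if u.1 = v.1 then x else y

/-- A subset `R ⊆ A(M)^ι` is a subpower if it is closed under all nine
fundamental operations of `A(M)` applied coordinatewise. -/
def IsSubpower {N : ℕ} (m : Minsky N) {ι : Type} (R : Set (ι → El N)) : Prop :=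
  (∀ a ∈ R, ∀ b ∈ R, (fun i => meet (a i) (b i)) ∈ R) ∧
  (∀ a ∈ R, ∀ b ∈ R, (fun i => Mop m (a i) (b i)) ∈ R) ∧
  (∀ a ∈ R, (fun i => M'op m (a i)) ∈ R) ∧
  (∀ a ∈ R, ∀ b ∈ R, (fun i => Iop (a i) (b i)) ∈ R) ∧
  (∀ a ∈ R, (fun i => Hop (a i)) ∈ R) ∧
  (∀ a ∈ R, ∀ b ∈ R, ∀ c ∈ R, (fun i => N0op (a i) (b i) (c i)) ∈ R) ∧
  (∀ a ∈ R, ∀ b ∈ R, ∀ c ∈ R, (fun i => Sop (a i) (b i) (c i)) ∈ R) ∧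
  (∀ u ∈ R, ∀ a ∈ R, ∀ b ∈ R, ∀ c ∈ R, (fun i => Ndotop (u i) (a i) (b i) (c i)) ∈ R) ∧
  (∀ u ∈ R, ∀ v ∈ R, ∀ a ∈ R, ∀ b ∈ R, (fun i => Pop (u i) (v i) (a i) (b i)) ∈ R)

/-- A tuple is synchronized if its state is constant across coordinates. -/
def Sync {N : ℕ} {ι : Type} (r : ι → El N) : Prop :=
  ∀ i j : ι, (r i).1 = (r j).1

/-- The subpower of `A(M)^ι` generated by a set `G`. -/
def Sg {N : ℕ} (m : Minsky N) {ι : Type} (G : Set (ι → El N)) : Set (ι → El N) :=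
  {x | ∀ R : Set (ι → El N), IsSubpower m R → G ⊆ R → x ∈ R}

/-- An `n`-ary operation `f` on `A(M)` preserves a relation `R ⊆ A(M)^ι` if
coordinatewise application of `f` to tuples from `R` lands in `R`. -/
def Preserves {N : ℕ} {n : ℕ} {ι : Type} (f : (Fin n → El N) → El N)
    (R : Set (ι → El N)) : Prop :=
  ∀ r : Fin n → ι → El N, (∀ j, r j ∈ R) → (fun i => f fun j => r j i) ∈ R

variable {N : ℕ}

/-- The relation underlying `μ`: `x ∈ E` and `x' ∈ {x, X(x)}`. -/
def Rel {N : ℕ} (x x' : El N) : Prop :=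
  x.2 ≠ Cnt.dot ∧ (x' = x ∨ x' = (x.1, Cnt.times))

lemma Rel.fst_eq {x x' : El N} (h : Rel x x') : x'.1 = x.1 := by
  rcases h.2 with h | h <;> simp [h]

lemma Rel.snd_ne {x x' : El N} (h : Rel x x') : x'.2 ≠ Cnt.dot := by
  rcases h.2 with h2 | h2
  · rw [h2]; exact h.1
  · simp [h2]

lemma rel_meet {x x' y y' : El N} (hx : Rel x x') (hy : Rel y y') :
    Rel (meet x y) (meet x' y') := by
  obtain ⟨hxd, hx⟩ := hx
  obtain ⟨hyd, hy⟩ := hy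
  rcases hx with rfl | rfl <;> rcases hy with rfl | rfl <;>
    unfold Rel meet <;> constructor <;>
    split_ifs <;> simp_all [Prod.ext_iff, min_def]

set_option maxHeartbeats 2000000 in
lemma rel_Mop (m : Minsky N) {x x' y y' : El N} (hx : Rel x x') (hy : Rel y y') :
    Rel (Mop m x y) (Mop m x' y') := by
  obtain ⟨hxd, hx⟩ := hx
  obtain ⟨hyd, hy⟩ := hy
  rcases hi : m.instr x.1 with ⟨R, j⟩ | ⟨R, k, j⟩ <;> cases R <;>
    rcases hx with rfl | rfl <;> rcases hy with rfl | rfl <;>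
    unfold Rel Mop Xf <;>
    constructor <;>
    (split_ifs <;> simp_all [hi, regCnt, Prod.ext_iff] <;>
      (try split_ifs) <;> (try simp_all [Prod.ext_iff]) <;> aesop)


lemma rel_M'op (m : Minsky N) {x x' : El N} (hx : Rel x x') :
    Rel (M'op m x) (M'op m x') := by
  obtain ⟨hxd, hx⟩ := hx
  rcases hi : m.instr x.1 with ⟨R, j⟩ | ⟨R, k, j⟩ <;> cases R <;>
    rcases hx with rfl | rfl <;>
    unfold Rel M'op Xf <;>
    constructor <;>
    (simp_all [hi, regCnt, Prod.ext_iff] <;> (try split_ifs) <;>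
      (try simp_all [Prod.ext_iff]) <;> (try aesop))

lemma rel_Iop {x x' y y' : El N} (hx : Rel x x') (hy : Rel y y') :
    Rel (Iop x y) (Iop x' y') := by
  obtain ⟨hxd, hx⟩ := hx
  obtain ⟨hyd, hy⟩ := hy
  rcases hx with rfl | rfl <;> rcases hy with rfl | rfl <;>
    unfold Rel Iop <;>
    constructor <;>
    (split_ifs <;> simp_all [Prod.ext_iff] <;> aesop)

lemma rel_Hop {x x' : El N} (hx : Rel x x') : Rel (Hop x) (Hop x') := by
  obtain ⟨hxd, hx⟩ := hx
  rcases hx with rfl | rfl <;>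
    unfold Rel Hop <;>
    constructor <;>
    (split_ifs <;> simp_all [Prod.ext_iff] <;> aesop)

lemma rel_Sop {x x' y y' z z' : El N} (hx : Rel x x') (hy : Rel y y')
    (hz : Rel z z') : Rel (Sop x y z) (Sop x' y' z') := by
  obtain ⟨hxd, hx⟩ := hx
  obtain ⟨hyd, hy⟩ := hy
  obtain ⟨hzd, hz⟩ := hz
  rcases hx with rfl | rfl <;> rcases hy with rfl | rfl <;> rcases hz with rfl | rfl <;>
    unfold Rel Sop <;>
    constructor <;>
    (split_ifs <;> simp_all [Prod.ext_iff] <;> aesop)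

lemma rel_Pop {u u' v v' x x' y y' : El N} (hu : Rel u u') (hv : Rel v v')
    (hx : Rel x x') (hy : Rel y y') :
    Rel (Pop u v x y) (Pop u' v' x' y') := by
  unfold Pop
  rw [hu.fst_eq, hv.fst_eq]
  split_ifs <;> assumption


lemma meet_fst (a b : El N) : (meet a b).1 = min a.1 b.1 := by
  unfold meet
  split_ifs with h
  · rw [h, min_self]
  · rfl

lemma rel_Ndotop {u u' x x' y y' z z' : El N} (hu : Rel u u') (hx : Rel x x')
    (hy : Rel y y') (hz : Rel z z') :
    Rel (Ndotop u x y z) (Ndotop u' x' y' z') := by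
  have e : ∀ (v a b c : El N), v.2 ≠ Cnt.dot →
      Ndotop v a b c =
        if a = b ∧ a.2 ≠ Cnt.times ∧ a.1 = c.1 then a
        else Xf (meet a (meet b c)) := by
    intro v a b c hv
    unfold Ndotop
    split_ifs <;> simp_all
  rw [e u x y z hu.1, e u' x' y' z' hu.snd_ne]
  have hfst : (meet x' (meet y' z')).1 = (meet x (meet y z)).1 := by
    rw [meet_fst, meet_fst, meet_fst, meet_fst, hx.fst_eq, hy.fst_eq, hz.fst_eq]
  constructor
  · split_ifs with h
    · exact hx.1
    · exact fun hc => Cnt.noConfusion hc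
  · by_cases hP' : x' = y' ∧ x'.2 ≠ Cnt.times ∧ x'.1 = z'.1
    · obtain ⟨h1, h2, h3⟩ := hP'
      have hx' : x' = x := by
        rcases hx.2 with h | h
        · exact h
        · exact absurd (by rw [h]) h2
      have hy' : y' = y := by
        rcases hy.2 with h | h
        · exact h
        · exact absurd (by rw [h1, h]) h2
      have hP : x = y ∧ x.2 ≠ Cnt.times ∧ x.1 = z.1 := by
        refine ⟨by rw [← hx', ← hy', h1], by rw [← hx']; exact h2, ?_⟩
        rw [← hx', ← hz.fst_eq]; exact h3
      rw [if_pos ⟨h1, h2, h3⟩, if_pos hP, hx']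
      exact Or.inl rfl
    · rw [if_neg hP']
      right
      unfold Xf
      rw [hfst]
      split_ifs with hP
      · obtain ⟨h1, h2, h3⟩ := hP
        have : (meet x (meet y z)).1 = x.1 := by
          rw [meet_fst, meet_fst, ← h1, h3, min_self, min_self]
        rw [this]
      · rfl


set_option maxHeartbeats 2000000 in
lemma rel_N0op {x x' y y' z z' : El N} (hx : Rel x x') (hy : Rel y y')
    (hz : Rel z z') : Rel (N0op x y z) (N0op x' y' z') := by
  obtain ⟨hxd, hx⟩ := hx
  obtain ⟨hyd, hy⟩ := hy
  obtain ⟨hzd, hz⟩ := hz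
  rcases hx with rfl | rfl <;> rcases hy with rfl | rfl <;> rcases hz with rfl | rfl <;>
    unfold Rel N0op Xf meet <;>
    constructor <;>
    (split_ifs <;> simp_all [Prod.ext_iff, min_def] <;> (try aesop))

/-- The relation `μ` as a binary relation on `A(M)`. -/
def Mu (N : ℕ) : Set (Fin 2 → El N) := {p | Rel (p 0) (p 1)}

lemma mu_subpower (m : Minsky N) : IsSubpower m (Mu N) := by
  refine ⟨?_, ?_, ?_, ?_, ?_, ?_, ?_, ?_, ?_⟩
  · exact fun a ha b hb => rel_meet ha hb
  · exact fun a ha b hb => rel_Mop m ha hb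
  · exact fun a ha => rel_M'op m ha
  · exact fun a ha b hb => rel_Iop ha hb
  · exact fun a ha => rel_Hop ha
  · exact fun a ha b hb c hc => rel_N0op ha hb hc
  · exact fun a ha b hb c hc => rel_Sop ha hb hc
  · exact fun u hu a ha b hb c hc => rel_Ndotop hu ha hb hc
  · exact fun u hu v hv a ha b hb => rel_Pop hu hv ha hb


/-- If `f` preserves all binary relations of `A(M)`, `g₁,…,g_n ∈ E` with
`g_ℓ ∈ C`, `f(ḡ) = α ∈ Y`, and replacing `g_ℓ` by `X(g_ℓ)` still yields an
output in `Y`, then that output equals `α` (Lemma: f is monotone on E). -/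
theorem f_E_monotone {N : ℕ} (mm : Minsky N) {n : ℕ}
    (f : (Fin n → El N) → El N)
    (hf : ∀ R : Set (Fin 2 → El N), IsSubpower mm R → Preserves f R)
    (g : Fin n → El N) (hg : ∀ i, (g i).2 ≠ Cnt.dot)
    (ℓ : Fin n) (hℓ : (g ℓ).2 = Cnt.zero ∨ (g ℓ).2 = Cnt.A ∨ (g ℓ).2 = Cnt.B)
    (α : El N) (hα : f g = α) (hαY : α.2 ≠ Cnt.times)
    (hY : (f (Function.update g ℓ (Xf (g ℓ)))).2 ≠ Cnt.times) :
    f (Function.update g ℓ (Xf (g ℓ))) = α := by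
  set g' := Function.update g ℓ (Xf (g ℓ)) with hg'
  set r : Fin n → Fin 2 → El N := fun j => ![g j, g' j] with hr
  have hrmu : ∀ j, r j ∈ Mu N := by
    intro j
    by_cases hj : j = ℓ
    · subst hj
      show Rel (g j) (g' j)
      rw [hg', Function.update_self]
      exact ⟨hg j, Or.inr rfl⟩
    · show Rel (g j) (g' j)
      rw [hg', Function.update_of_ne hj]
      exact ⟨hg j, Or.inl rfl⟩
  have hmem := hf (Mu N) (mu_subpower mm) r hrmu
  have e0 : (fun j => r j 0) = g := by funext j; rfl
  have e1 : (fun j => r j 1) = g' := by funext j; rfl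
  have hrel : Rel (f g) (f g') := by
    have : Rel (f fun j => r j 0) (f fun j => r j 1) := hmem
    rwa [e0, e1] at this
  rw [hα] at hrel
  rcases hrel.2 with h | h
  · exact h
  · exact absurd (by rw [h]) hY


end AMPaper
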